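/- Let P be the probability measure on ℕ with P({n}) = 1/2^n. For every integer n ≥ 4, both sets {1, …, n−3, n−2, Av[n−1,n], Av[n+1,∞)} and {1, …, n−3, Av[n−2,n−1], Av[n,n+1], Av[n+2,∞)} attain the n-th quantization error V_n = 2^{3−n}/3; in particular the optimal set of n-means is not unique. -/

import Mathlib

/-- Distortion error of a nonempty finite set α for the measure P({n}) = 1/2^n, n ≥ 1. -/
noncomputable def errG (α : Finset ℝ) (h : α.Nonempty) : ℝ :=
  ∑' n : ℕ, (1/2^(n+1) : ℝ) * α.inf' h (fun a => ((n+1 : ℝ) - a)^2)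

/-- Conditional expectation E(X | X ∈ {k,…,l}). -/
noncomputable def avG (k l : ℕ) : ℝ :=
  (∑ j ∈ Finset.Icc k l, (j : ℝ)/2^j) / (∑ j ∈ Finset.Icc k l, (1 : ℝ)/2^j)

/-- Conditional expectation E(X | X ≥ k). -/
noncomputable def avGTail (k : ℕ) : ℝ :=
  (∑' n : ℕ, ((n+k : ℝ))/2^(n+k)) / (∑' n : ℕ, (1 : ℝ)/2^(n+k))

/-! ### Basic geometric series facts -/

lemma half_pow (k : ℕ) : (1/2^k : ℝ) = (1/2 : ℝ)^k := by
  rw [div_pow, one_pow]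

lemma sum0 : Summable (fun n : ℕ => (1/2 : ℝ)^n) :=
  summable_geometric_of_lt_one (by norm_num) (by norm_num)

lemma t0 : ∑' n : ℕ, (1/2 : ℝ)^n = 2 := by
  rw [tsum_geometric_of_lt_one (by norm_num) (by norm_num)]; norm_num

lemma sum1 : Summable (fun n : ℕ => (n : ℝ) * (1/2 : ℝ)^n) := by
  have := summable_pow_mul_geometric_of_norm_lt_one (R := ℝ) 1 (r := 1/2) (by norm_num)
  simpa using this

lemma t1 : ∑' n : ℕ, (n : ℝ) * (1/2 : ℝ)^n = 2 := by
  have := tsum_coe_mul_geometric_of_norm_lt_one (𝕜 := ℝ) (r := 1/2) (by norm_num)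
  rw [this]; norm_num

lemma sum2 : Summable (fun n : ℕ => (n : ℝ)^2 * (1/2 : ℝ)^n) := by
  have := summable_pow_mul_geometric_of_norm_lt_one (R := ℝ) 2 (r := 1/2) (by norm_num)
  simpa using this

lemma t2 : ∑' n : ℕ, (n : ℝ)^2 * (1/2 : ℝ)^n = 6 := by
  set T := ∑' n : ℕ, (n : ℝ)^2 * (1/2 : ℝ)^n with hT
  have key : T = T/2 + 3 := by
    have h1 := Summable.tsum_eq_zero_add sum2
    have h2 : ∀ n : ℕ, ((n:ℝ)+1)^2 * (1/2:ℝ)^(n+1)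
        = (1/2) * ((n:ℝ)^2 * (1/2)^n) + ((n:ℝ) * (1/2)^n) + (1/2) * ((1/2:ℝ)^n) := by
      intro n; ring
    calc T = 0 + ∑' n : ℕ, ((n:ℝ)+1)^2 * (1/2:ℝ)^(n+1) := by
            rw [hT, h1]; norm_num
      _ = ∑' n : ℕ, ((1/2) * ((n:ℝ)^2 * (1/2)^n) + ((n:ℝ) * (1/2)^n) + (1/2) * ((1/2:ℝ)^n)) := by
            rw [zero_add]; exact tsum_congr h2
      _ = (1/2) * T + 2 + (1/2) * 2 := by
            rw [Summable.tsum_add ((sum2.mul_left _).add sum1) (sum0.mul_left _),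
                Summable.tsum_add (sum2.mul_left _) sum1, tsum_mul_left, tsum_mul_left, t1, t0]
      _ = T/2 + 3 := by ring
  linarith

lemma summable_quad (c : ℝ) : Summable (fun n : ℕ => (1/2 : ℝ)^(n+1) * ((n:ℝ) - c)^2) := by
  have he : (fun n : ℕ => (1/2 : ℝ)^(n+1) * ((n:ℝ) - c)^2)
      = fun n : ℕ => (1/2) * ((n:ℝ)^2 * (1/2)^n) + (-c) * ((n:ℝ) * (1/2)^n)
        + (c^2/2) * ((1/2:ℝ)^n) := by
    funext n; ring
  rw [he]
  exact ((sum2.mul_left _).add (sum1.mul_left _)).add (sum0.mul_left _)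

lemma tsum_quad (c : ℝ) : ∑' n : ℕ, (1/2 : ℝ)^(n+1) * ((n:ℝ) - c)^2 = (c-1)^2 + 2 := by
  have he : (fun n : ℕ => (1/2 : ℝ)^(n+1) * ((n:ℝ) - c)^2)
      = fun n : ℕ => (1/2) * ((n:ℝ)^2 * (1/2)^n) + (-c) * ((n:ℝ) * (1/2)^n)
        + (c^2/2) * ((1/2:ℝ)^n) := by
    funext n; ring
  rw [he, Summable.tsum_add ((sum2.mul_left _).add (sum1.mul_left _)) (sum0.mul_left _),
      Summable.tsum_add (sum2.mul_left _) (sum1.mul_left _), tsum_mul_left, tsum_mul_left,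
      tsum_mul_left, t0, t1, t2]
  ring

/-! ### errG basics -/

lemma inf'_nonneg (α : Finset ℝ) (h : α.Nonempty) (j : ℝ) :
    0 ≤ α.inf' h (fun a => (j - a)^2) :=
  Finset.le_inf' h _ (fun b _ => sq_nonneg _)

lemma summable_err (α : Finset ℝ) (h : α.Nonempty) :
    Summable (fun n : ℕ => (1/2^(n+1) : ℝ) * α.inf' h (fun a => ((n+1 : ℝ) - a)^2)) := by
  obtain ⟨a0, ha0⟩ := id h
  refine Summable.of_nonneg_of_le ?_ ?_ (summable_quad (a0 - 1))
  · intro n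
    have h1 : (0:ℝ) ≤ 1/2^(n+1) := by positivity
    exact mul_nonneg h1 (inf'_nonneg α h _)
  · intro n
    have h2 : α.inf' h (fun a => ((n+1 : ℝ) - a)^2) ≤ ((n+1:ℝ) - a0)^2 :=
      Finset.inf'_le _ ha0
    have h3 : ((n+1:ℝ) - a0)^2 = ((n:ℝ) - (a0-1))^2 := by ring
    rw [half_pow]
    have h1 : (0:ℝ) ≤ (1/2:ℝ)^(n+1) := by positivity
    calc (1/2:ℝ)^(n+1) * α.inf' h (fun a => ((n+1 : ℝ) - a)^2)
        ≤ (1/2:ℝ)^(n+1) * ((n+1:ℝ) - a0)^2 := by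
          exact mul_le_mul_of_nonneg_left h2 h1
      _ = (1/2:ℝ)^(n+1) * ((n:ℝ) - (a0-1))^2 := by rw [h3]

lemma errG_congr (α β : Finset ℝ) (h : α.Nonempty) (hβ : β.Nonempty) (e : α = β) :
    errG α h = errG β hβ := by subst e; rfl

/-- split errG at L with explicit tail center e -/
lemma errG_explicit (α : Finset ℝ) (h : α.Nonempty) (L : ℕ) (e : ℝ)
    (htail : ∀ i : ℕ, α.inf' h (fun a => ((i + L + 1 : ℝ) - a)^2) = ((i + L + 1 : ℝ) - e)^2) :
    errG α h = (∑ i ∈ Finset.range L, (1/2^(i+1) : ℝ) * α.inf' h (fun a => ((i+1 : ℝ) - a)^2))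
      + (1/2:ℝ)^L * ((e - L - 2)^2 + 2) := by
  have hs := summable_err α h
  have hsplit := Summable.sum_add_tsum_nat_add (f := fun n : ℕ =>
      (1/2^(n+1) : ℝ) * α.inf' h (fun a => ((n+1 : ℝ) - a)^2)) L hs
  rw [errG, ← hsplit]
  congr 1
  have hpt : ∀ i : ℕ, (1/2^(i+L+1) : ℝ) * α.inf' h (fun a => ((↑(i+L)+1 : ℝ) - a)^2)
      = (1/2:ℝ)^L * ((1/2:ℝ)^(i+1) * ((i:ℝ) - (e - L - 1))^2) := by
    intro i
    have h1 : α.inf' h (fun a => ((↑(i+L)+1 : ℝ) - a)^2) = ((i + L + 1 : ℝ) - e)^2 := by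
      have := htail i
      convert this using 3 <;> push_cast <;> ring
    calc (1/2^(i+L+1) : ℝ) * α.inf' h (fun a => ((↑(i+L)+1 : ℝ) - a)^2)
        = (1/2^(i+L+1) : ℝ) * ((i + L + 1 : ℝ) - e)^2 := by rw [h1]
      _ = (1/2:ℝ)^L * ((1/2:ℝ)^(i+1) * ((i:ℝ) - (e - L - 1))^2) := by
          rw [half_pow]
          rw [show i+L+1 = L + (i+1) by ring, pow_add]
          ring
  calc ∑' i : ℕ, (1/2^(i+L+1) : ℝ) * α.inf' h (fun a => ((↑(i+L)+1 : ℝ) - a)^2)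
      = ∑' i : ℕ, (1/2:ℝ)^L * ((1/2:ℝ)^(i+1) * ((i:ℝ) - (e - L - 1))^2) := by
        exact tsum_congr hpt
    _ = (1/2:ℝ)^L * ∑' i : ℕ, ((1/2:ℝ)^(i+1) * ((i:ℝ) - (e - L - 1))^2) := tsum_mul_left
    _ = (1/2:ℝ)^L * ((e - L - 2)^2 + 2) := by rw [tsum_quad]; ring_nf

/-! ### Average values -/

lemma avG_succ (k : ℕ) : avG k (k+1) = (k : ℝ) + 1/3 := by
  rw [avG, Finset.sum_Icc_succ_top (Nat.le_succ k), Finset.sum_Icc_succ_top (Nat.le_succ k),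
      Finset.Icc_self, Finset.sum_singleton, Finset.sum_singleton]
  have h2 : (0:ℝ) < 2^k := by positivity
  push_cast
  field_simp
  ring

lemma avGTail_val (k : ℕ) : avGTail k = (k : ℝ) + 1 := by
  have hnum : (fun n : ℕ => ((n+k : ℝ))/2^(n+k))
      = fun n : ℕ => (1/2:ℝ)^k * (((n:ℝ) * (1/2)^n) + (k:ℝ) * ((1/2:ℝ)^n)) := by
    funext n
    rw [div_eq_mul_one_div, half_pow, pow_add]
    push_cast
    ring
  have hden : (fun n : ℕ => (1 : ℝ)/2^(n+k)) = fun n : ℕ => (1/2:ℝ)^k * ((1/2:ℝ)^n) := by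
    funext n
    rw [half_pow, pow_add]; ring
  rw [avGTail, hnum, hden, tsum_mul_left, tsum_mul_left,
      Summable.tsum_add sum1 (sum0.mul_left _), tsum_mul_left, t0, t1]
  have : ((1:ℝ)/2)^k ≠ 0 := by positivity
  field_simp
  ring

/-! ### Lower bound machinery -/

lemma sum_sq_nonneg (N : ℕ) (t : ℝ) :
    0 ≤ ∑ i ∈ Finset.range N, (1/2:ℝ)^(i+1) * ((i+1:ℝ) - t)^2 := by
  apply Finset.sum_nonneg; intro i _; positivity

lemma sum_sq_prefix (N k : ℕ) (hk : k ≤ N) (t : ℝ) :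
    ∑ i ∈ Finset.range k, (1/2:ℝ)^(i+1) * ((i+1:ℝ) - t)^2
      ≤ ∑ i ∈ Finset.range N, (1/2:ℝ)^(i+1) * ((i+1:ℝ) - t)^2 := by
  apply Finset.sum_le_sum_of_subset_of_nonneg (Finset.range_subset_range.mpr hk)
  intro i _ _; positivity

lemma lb2 (N : ℕ) (hN : 2 ≤ N) (t : ℝ) :
    (1/6 : ℝ) ≤ ∑ i ∈ Finset.range N, (1/2:ℝ)^(i+1) * ((i+1:ℝ) - t)^2 := by
  refine le_trans ?_ (sum_sq_prefix N 2 hN t)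
  simp [Finset.sum_range_succ]
  nlinarith [sq_nonneg (t - 4/3)]

lemma lb3 (N : ℕ) (hN : 3 ≤ N) (t : ℝ) :
    (13/28 : ℝ) ≤ ∑ i ∈ Finset.range N, (1/2:ℝ)^(i+1) * ((i+1:ℝ) - t)^2 := by
  refine le_trans ?_ (sum_sq_prefix N 3 hN t)
  simp [Finset.sum_range_succ]
  nlinarith [sq_nonneg (t - 11/7)]

lemma lb4 (N : ℕ) (hN : 4 ≤ N) (t : ℝ) :
    (2/3 : ℝ) ≤ ∑ i ∈ Finset.range N, (1/2:ℝ)^(i+1) * ((i+1:ℝ) - t)^2 := by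
  refine le_trans ?_ (sum_sq_prefix N 4 hN t)
  simp [Finset.sum_range_succ]
  nlinarith [sq_nonneg (t - 26/15)]

noncomputable def Bnd : ℕ → ℝ := fun k => if k ≤ 1 then 2 else (8/3)*(1/2:ℝ)^k

lemma Bnd_nonneg (k : ℕ) : 0 ≤ Bnd k := by
  unfold Bnd; split <;> positivity

lemma Bnd_pow_succ (m : ℕ) : (8/3:ℝ)*(1/2:ℝ)^(m+3) = ((8/3:ℝ)*(1/2:ℝ)^(m+2))/2 := by
  rw [pow_succ]; ring

lemma Bnd_small (m : ℕ) : Bnd (m+2) ≤ 2/3 ∧ (0:ℝ) < Bnd (m+2) ∧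
    Bnd (m+2) ≤ Bnd (m+1) ∧ Bnd (m+2) ≤ Bnd (m+1)/2 ∧
    Bnd (m+2) ≤ 1/6 + Bnd (m+1)/4 ∧ Bnd (m+2) ≤ 13/28 + Bnd (m+1)/8 := by
  rcases m with _ | m'
  · norm_num [Bnd]
  · have h1 : ¬ (m' + 1 + 2 ≤ 1) := by omega
    have h2 : ¬ (m' + 1 + 1 ≤ 1) := by omega
    simp only [Bnd, if_neg h1, if_neg h2]
    have hble : ((1:ℝ)/2)^(m'+2) ≤ ((1:ℝ)/2)^2 :=
      pow_le_pow_of_le_one (by norm_num) (by norm_num) (by omega)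
    have hbpos : (0:ℝ) < ((1:ℝ)/2)^(m'+2) := by positivity
    rw [show m'+1+2 = m'+3 from rfl, show m'+1+1 = m'+2 from rfl, Bnd_pow_succ m']
    norm_num at hble ⊢
    and_intros <;> linarith

lemma final_arith (m N : ℕ) (G t : ℝ) (hG : Bnd (m+1) ≤ G) :
    Bnd (m+2) ≤ (∑ i ∈ Finset.range N, (1/2:ℝ)^(i+1) * ((i+1:ℝ) - t)^2)
      + (1/2:ℝ)^N * G := by
  obtain ⟨hBE, hBpos, hBA, hBB, hBC, hBD⟩ := Bnd_small m
  have hG0 : 0 ≤ G := le_trans (Bnd_nonneg _) hG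
  have hS0 := sum_sq_nonneg N t
  rcases le_or_gt 4 N with h4 | h4
  · have hSl := lb4 N h4 t
    have hterm : 0 ≤ (1/2:ℝ)^N * G := mul_nonneg (by positivity) hG0
    linarith
  · interval_cases N
    · rw [Finset.sum_range_zero, pow_zero, zero_add, one_mul]; linarith
    · rw [show ((1:ℝ)/2)^1 = 1/2 by norm_num]; linarith
    · rw [show ((1:ℝ)/2)^2 = 1/4 by norm_num]; linarith [lb2 2 le_rfl t]
    · rw [show ((1:ℝ)/2)^3 = 1/8 by norm_num]; linarith [lb3 3 le_rfl t]

lemma Bnd_mono (k : ℕ) : Bnd (k+1) ≤ Bnd k := by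
  unfold Bnd
  rcases k with _ | k'
  · norm_num
  · rcases k' with _ | k''
    · norm_num
    · have h1 : ¬ (k''+1+1 ≤ 1) := by omega
      have h2 : ¬ (k''+1+1+1 ≤ 1) := by omega
      simp only [if_neg h1, if_neg h2]
      have : ((1:ℝ)/2)^(k''+1+1+1) ≤ ((1:ℝ)/2)^(k''+1+1) :=
        pow_le_pow_of_le_one (by norm_num) (by norm_num) (by omega)
      linarith

lemma errG_lower : ∀ (m : ℕ) (α : Finset ℝ) (h : α.Nonempty),
    α.card ≤ m + 1 → Bnd (m+1) ≤ errG α h := by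
  intro m
  induction m with
  | zero =>
    intro α h hcard
    have h1 : α.card = 1 := le_antisymm hcard (Finset.card_pos.mpr h)
    obtain ⟨a, rfl⟩ := Finset.card_eq_one.mp h1
    have he : errG {a} h = ∑' n : ℕ, (1/2:ℝ)^(n+1) * ((n:ℝ) - (a-1))^2 := by
      unfold errG
      apply tsum_congr
      intro n
      rw [Finset.inf'_singleton, half_pow]
      ring_nf
    rw [he, tsum_quad]
    have : Bnd 1 = 2 := by norm_num [Bnd]
    nlinarith [sq_nonneg (a - 2)]
  | succ m IH =>
    intro α h hcard
    by_cases hc : α.card ≤ m + 1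
    · exact le_trans (Bnd_mono (m+1)) (IH α h hc)
    set a1 := α.min' h with ha1def
    have ha1 : a1 ∈ α := α.min'_mem h
    set β := α.erase a1 with hβdef
    have hβcard : β.card = m + 1 := by
      rw [hβdef, Finset.card_erase_of_mem ha1]; omega
    have hβne : β.Nonempty := Finset.card_pos.mp (by omega)
    set a2 := β.min' hβne with ha2def
    have ha2β : a2 ∈ β := β.min'_mem hβne
    have ha2α : a2 ∈ α := Finset.mem_of_mem_erase ha2β
    have ha12 : a1 ≤ a2 := α.min'_le a2 ha2α
    set x := (a1 + a2) / 2 with hxdef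
    set N := (⌊x⌋).toNat with hNdef
    have hxN : x < (N:ℝ) + 1 := by
      have h1 : x < (⌊x⌋:ℝ) + 1 := Int.lt_floor_add_one x
      have h2 : ((⌊x⌋:ℤ):ℝ) ≤ ((N:ℕ):ℝ) := by
        have := Int.self_le_toNat ⌊x⌋
        exact_mod_cast this
      linarith
    have hNx : 1 ≤ N → (N:ℝ) ≤ x := by
      intro h1N
      have hpos : 0 ≤ ⌊x⌋ := by
        by_contra hc'
        push_neg at hc'
        have : N = 0 := by rw [hNdef]; exact Int.toNat_eq_zero.mpr (le_of_lt hc')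
        omega
      have he : ((N:ℕ):ℝ) = ((⌊x⌋:ℤ):ℝ) := by
        rw [hNdef]
        exact_mod_cast congrArg (Int.cast : ℤ → ℝ) (Int.toNat_of_nonneg hpos)
      rw [he]
      exact Int.floor_le x
    have KeyLow : ∀ j : ℝ, j ≤ x → α.inf' h (fun a => (j - a)^2) = (j - a1)^2 := by
      intro j hj
      apply le_antisymm (Finset.inf'_le _ ha1)
      apply Finset.le_inf' h
      intro b hb
      by_cases hb1 : b = a1
      · rw [hb1]
      · have hbβ : b ∈ β := Finset.mem_erase.mpr ⟨hb1, hb⟩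
        have hab : a2 ≤ b := β.min'_le b hbβ
        nlinarith
    have KeyHigh : ∀ j : ℝ, x ≤ j →
        α.inf' h (fun a => (j - a)^2) = β.inf' hβne (fun a => (j - a)^2) := by
      intro j hj
      apply le_antisymm
      · apply Finset.le_inf' hβne
        intro b hb
        exact Finset.inf'_le _ (Finset.mem_of_mem_erase hb)
      · apply Finset.le_inf' h
        intro b hb
        by_cases hb1 : b = a1
        · have h1 : β.inf' hβne (fun a => (j - a)^2) ≤ (j - a2)^2 :=
            Finset.inf'_le _ ha2β
          have h2 : (j - a2)^2 ≤ (j - b)^2 := by rw [hb1]; nlinarith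
          linarith
        · exact Finset.inf'_le _ (Finset.mem_erase.mpr ⟨hb1, hb⟩)
    set γ := β.image (fun b => b - (N:ℝ)) with hγdef
    have hγne : γ.Nonempty := hβne.image _
    have hγcard : γ.card ≤ m + 1 := le_trans (Finset.card_image_le) (le_of_eq hβcard)
    have hG : Bnd (m+1) ≤ errG γ hγne := IH γ hγne hγcard
    have hsplit : (∑ i ∈ Finset.range N, (1/2^(i+1) : ℝ) * α.inf' h (fun a => ((i+1 : ℝ) - a)^2))
        + ∑' i : ℕ, (1/2^(i+N+1) : ℝ) * α.inf' h (fun a => ((↑(i+N)+1 : ℝ) - a)^2)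
        = errG α h :=
      Summable.sum_add_tsum_nat_add
        (f := fun n : ℕ => (1/2^(n+1) : ℝ) * α.inf' h (fun a => ((n+1 : ℝ) - a)^2)) N
        (summable_err α h)
    have hfin : (∑ i ∈ Finset.range N, (1/2^(i+1) : ℝ) * α.inf' h (fun a => ((i+1 : ℝ) - a)^2))
        = ∑ i ∈ Finset.range N, (1/2:ℝ)^(i+1) * ((i+1:ℝ) - a1)^2 := by
      apply Finset.sum_congr rfl
      intro i hi
      have hiN : i + 1 ≤ N := Finset.mem_range.mp hi
      have hjx : ((i:ℝ) + 1) ≤ x := by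
        have h1 : ((i:ℝ) + 1) ≤ (N:ℝ) := by exact_mod_cast hiN
        have h2 : (N:ℝ) ≤ x := hNx (by omega)
        linarith
      rw [KeyLow ((i:ℝ)+1) hjx, half_pow]
    have hcomp : ∀ i : ℕ, ((fun b => ((i:ℝ)+1 - b)^2) ∘ (fun b => b - (N:ℝ)))
        = fun a => ((↑(i+N):ℝ)+1 - a)^2 := by
      intro i
      funext b
      simp only [Function.comp_apply]
      push_cast
      ring
    have htail : (∑' i : ℕ, (1/2^(i+N+1) : ℝ) * α.inf' h (fun a => ((↑(i+N)+1 : ℝ) - a)^2))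
        = (1/2:ℝ)^N * errG γ hγne := by
      rw [errG, ← tsum_mul_left]
      apply tsum_congr
      intro i
      have hjx : x ≤ ((↑(i+N):ℝ)+1) := by
        push_cast
        linarith
      rw [KeyHigh _ hjx]
      have hims : γ.inf' hγne (fun a => ((i+1 : ℝ) - a)^2)
          = β.inf' hβne (fun a => ((↑(i+N):ℝ)+1 - a)^2) := by
        have h0 := Finset.inf'_image (s := β) (f := fun b => b - (N:ℝ))
          (hβne.image _) (fun a => ((i+1 : ℝ) - a)^2)
        rw [hcomp i] at h0
        exact h0
      rw [← hims, half_pow, half_pow, show i+N+1 = N+(i+1) by omega, pow_add]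
      ring
    have hmain : errG α h
        = (∑ i ∈ Finset.range N, (1/2:ℝ)^(i+1) * ((i+1:ℝ) - a1)^2)
          + (1/2:ℝ)^N * errG γ hγne := by
      rw [← hsplit, hfin, htail]
    rw [hmain]
    exact final_arith m N (errG γ hγne) a1 hG

/-! ### Explicit computations for the two optimal sets -/

lemma part2comp (m : ℕ) :
    ∀ h : ((Finset.Icc 1 (m+2)).image (fun j : ℕ => (j : ℝ))
        ∪ {(m:ℝ)+10/3, (m:ℝ)+6}).Nonempty,
    errG ((Finset.Icc 1 (m+2)).image (fun j : ℕ => (j : ℝ)) ∪ {(m:ℝ)+10/3, (m:ℝ)+6}) h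
      = (8/3) * (1/2:ℝ)^(m+4) := by
  intro h
  set A := (Finset.Icc 1 (m+2)).image (fun j : ℕ => (j : ℝ)) ∪ {(m:ℝ)+10/3, (m:ℝ)+6} with hA
  have hmem : ∀ a ∈ A, (∃ k : ℕ, 1 ≤ k ∧ k ≤ m+2 ∧ a = (k:ℝ)) ∨ a = (m:ℝ)+10/3 ∨ a = (m:ℝ)+6 := by
    intro a ha
    rw [hA, Finset.mem_union, Finset.mem_image] at ha
    rcases ha with ⟨k, hk, rfl⟩ | ha
    · rw [Finset.mem_Icc] at hk
      exact Or.inl ⟨k, hk.1, hk.2, rfl⟩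
    · rw [Finset.mem_insert, Finset.mem_singleton] at ha
      tauto
  have hm1 : ∀ k : ℕ, 1 ≤ k → k ≤ m+2 → ((k:ℝ)) ∈ A := by
    intro k h1 h2
    exact Finset.mem_union_left _ (Finset.mem_image_of_mem _ (Finset.mem_Icc.mpr ⟨h1, h2⟩))
  have hm2 : (m:ℝ)+10/3 ∈ A := Finset.mem_union_right _ (Finset.mem_insert_self _ _)
  have hm3 : (m:ℝ)+6 ∈ A :=
    Finset.mem_union_right _ (Finset.mem_insert_of_mem (Finset.mem_singleton_self _))
  have htail : ∀ i : ℕ, A.inf' h (fun a => ((i + (m+4) + 1 : ℝ) - a)^2)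
      = ((i + (m+4) + 1 : ℝ) - ((m:ℝ)+6))^2 := by
    intro i
    have hi0 : (0:ℝ) ≤ (i:ℝ) := Nat.cast_nonneg i
    apply le_antisymm (Finset.inf'_le _ hm3)
    apply Finset.le_inf' h
    intro b hb
    rcases hmem b hb with ⟨k, hk1, hk2, rfl⟩ | rfl | rfl
    · have hkr : (k:ℝ) ≤ (m:ℝ)+2 := by exact_mod_cast hk2
      have hk0 : (0:ℝ) ≤ (k:ℝ) := Nat.cast_nonneg k
      nlinarith [mul_nonneg (show (0:ℝ) ≤ (m:ℝ)+6-(k:ℝ) by linarith)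
        (show (0:ℝ) ≤ 2*(i:ℝ)+(m:ℝ)+4-(k:ℝ) by linarith)]
    · nlinarith [hi0]
    · exact le_refl _
  have herr := errG_explicit A h (m+4) ((m:ℝ)+6) (by
    intro i
    have := htail i
    convert this using 3 <;> push_cast <;> ring)
  have hz : ∀ i : ℕ, i ≤ m+1 → A.inf' h (fun a => ((i+1 : ℝ) - a)^2) = 0 := by
    intro i hi
    apply le_antisymm
    · have hmm := hm1 (i+1) (by omega) (by omega)
      have h0 := Finset.inf'_le (fun a => ((i+1 : ℝ) - a)^2) hmm
      simp at h0; exact h0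
    · exact inf'_nonneg A h _
  have hv1 : A.inf' h (fun a => (((m+2 : ℕ):ℝ)+1 - a)^2) = 1/9 := by
    apply le_antisymm
    · have h0 := Finset.inf'_le (fun a => (((m+2 : ℕ):ℝ)+1 - a)^2) hm2
      calc A.inf' h _ ≤ (((m+2 : ℕ):ℝ)+1 - ((m:ℝ)+10/3))^2 := h0
        _ = 1/9 := by push_cast; ring
    · apply Finset.le_inf' h
      intro b hb
      rcases hmem b hb with ⟨k, hk1, hk2, rfl⟩ | rfl | rfl
      · have hkr : (k:ℝ) ≤ (m:ℝ)+2 := by exact_mod_cast hk2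
        push_cast
        nlinarith
      · push_cast; nlinarith
      · push_cast; nlinarith
  have hv2 : A.inf' h (fun a => (((m+3 : ℕ):ℝ)+1 - a)^2) = 4/9 := by
    apply le_antisymm
    · have h0 := Finset.inf'_le (fun a => (((m+3 : ℕ):ℝ)+1 - a)^2) hm2
      calc A.inf' h _ ≤ (((m+3 : ℕ):ℝ)+1 - ((m:ℝ)+10/3))^2 := h0
        _ = 4/9 := by push_cast; ring
    · apply Finset.le_inf' h
      intro b hb
      rcases hmem b hb with ⟨k, hk1, hk2, rfl⟩ | rfl | rfl
      · have hkr : (k:ℝ) ≤ (m:ℝ)+2 := by exact_mod_cast hk2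
        push_cast
        nlinarith
      · push_cast; nlinarith
      · push_cast; nlinarith
  have hsum : (∑ i ∈ Finset.range (m+4), (1/2^(i+1) : ℝ) * A.inf' h (fun a => ((i+1 : ℝ) - a)^2))
      = (1/2:ℝ)^(m+3) * (1/9) + (1/2:ℝ)^(m+4) * (4/9) := by
    rw [Finset.sum_range_succ, Finset.sum_range_succ]
    have hz2 : (∑ i ∈ Finset.range (m+2), (1/2^(i+1) : ℝ) * A.inf' h (fun a => ((i+1 : ℝ) - a)^2)) = 0 := by
      apply Finset.sum_eq_zero
      intro i hi
      rw [hz i (by simpa using Nat.lt_succ_iff.mp (Finset.mem_range.mp hi))]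
      ring
    rw [hz2, hv1, hv2, half_pow, half_pow]
    ring
  rw [herr, hsum]
  have hq : (1/2:ℝ)^(m+3) = 2 * (1/2:ℝ)^(m+4) := by rw [pow_succ]; ring
  rw [hq]
  push_cast
  ring

lemma part3comp (m : ℕ) :
    ∀ h : ((Finset.Icc 1 (m+1)).image (fun j : ℕ => (j : ℝ))
        ∪ {(m:ℝ)+7/3, (m:ℝ)+13/3, (m:ℝ)+7}).Nonempty,
    errG ((Finset.Icc 1 (m+1)).image (fun j : ℕ => (j : ℝ)) ∪ {(m:ℝ)+7/3, (m:ℝ)+13/3, (m:ℝ)+7}) h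
      = (8/3) * (1/2:ℝ)^(m+4) := by
  intro h
  set A := (Finset.Icc 1 (m+1)).image (fun j : ℕ => (j : ℝ)) ∪ {(m:ℝ)+7/3, (m:ℝ)+13/3, (m:ℝ)+7}
    with hA
  have hmem : ∀ a ∈ A, (∃ k : ℕ, 1 ≤ k ∧ k ≤ m+1 ∧ a = (k:ℝ))
      ∨ a = (m:ℝ)+7/3 ∨ a = (m:ℝ)+13/3 ∨ a = (m:ℝ)+7 := by
    intro a ha
    rw [hA, Finset.mem_union, Finset.mem_image] at ha
    rcases ha with ⟨k, hk, rfl⟩ | ha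
    · rw [Finset.mem_Icc] at hk
      exact Or.inl ⟨k, hk.1, hk.2, rfl⟩
    · rw [Finset.mem_insert, Finset.mem_insert, Finset.mem_singleton] at ha
      tauto
  have hm1 : ∀ k : ℕ, 1 ≤ k → k ≤ m+1 → ((k:ℝ)) ∈ A := by
    intro k h1 h2
    exact Finset.mem_union_left _ (Finset.mem_image_of_mem _ (Finset.mem_Icc.mpr ⟨h1, h2⟩))
  have hm2 : (m:ℝ)+7/3 ∈ A := Finset.mem_union_right _ (Finset.mem_insert_self _ _)
  have hm3 : (m:ℝ)+13/3 ∈ A :=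
    Finset.mem_union_right _ (Finset.mem_insert_of_mem (Finset.mem_insert_self _ _))
  have hm4 : (m:ℝ)+7 ∈ A :=
    Finset.mem_union_right _ (Finset.mem_insert_of_mem
      (Finset.mem_insert_of_mem (Finset.mem_singleton_self _)))
  have htail : ∀ i : ℕ, A.inf' h (fun a => ((i + (m+5) + 1 : ℝ) - a)^2)
      = ((i + (m+5) + 1 : ℝ) - ((m:ℝ)+7))^2 := by
    intro i
    have hi0 : (0:ℝ) ≤ (i:ℝ) := Nat.cast_nonneg i
    apply le_antisymm (Finset.inf'_le _ hm4)
    apply Finset.le_inf' h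
    intro b hb
    rcases hmem b hb with ⟨k, hk1, hk2, rfl⟩ | rfl | rfl | rfl
    · have hkr : (k:ℝ) ≤ (m:ℝ)+1 := by exact_mod_cast hk2
      have hk0 : (0:ℝ) ≤ (k:ℝ) := Nat.cast_nonneg k
      nlinarith [mul_nonneg (show (0:ℝ) ≤ (m:ℝ)+7-(k:ℝ) by linarith)
        (show (0:ℝ) ≤ 2*(i:ℝ)+(m:ℝ)+5-(k:ℝ) by linarith)]
    · nlinarith [hi0]
    · nlinarith [hi0]
    · exact le_refl _
  have herr := errG_explicit A h (m+5) ((m:ℝ)+7) (by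
    intro i
    have := htail i
    convert this using 3 <;> push_cast <;> ring)
  have hz : ∀ i : ℕ, i ≤ m → A.inf' h (fun a => ((i+1 : ℝ) - a)^2) = 0 := by
    intro i hi
    apply le_antisymm
    · have hmm := hm1 (i+1) (by omega) (by omega)
      have h0 := Finset.inf'_le (fun a => ((i+1 : ℝ) - a)^2) hmm
      simp at h0; exact h0
    · exact inf'_nonneg A h _
  have hval : ∀ (i : ℕ) (v c : ℝ), c ∈ A → (((i:ℕ):ℝ)+1 - c)^2 = v →
      (∀ b ∈ A, v ≤ (((i:ℕ):ℝ)+1 - b)^2) → A.inf' h (fun a => (((i:ℕ):ℝ)+1 - a)^2) = v := by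
    intro i v c hc hvc hlb
    apply le_antisymm
    · calc A.inf' h _ ≤ (((i:ℕ):ℝ)+1 - c)^2 := Finset.inf'_le _ hc
        _ = v := hvc
    · exact Finset.le_inf' h _ hlb
  have hv1 : A.inf' h (fun a => (((m+1 : ℕ):ℝ)+1 - a)^2) = 1/9 := by
    apply hval (m+1) _ ((m:ℝ)+7/3) hm2 (by push_cast; ring)
    intro b hb
    rcases hmem b hb with ⟨k, hk1, hk2, rfl⟩ | rfl | rfl | rfl <;>
      [skip; (push_cast; nlinarith); (push_cast; nlinarith); (push_cast; nlinarith)]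
    have hkr : (k:ℝ) ≤ (m:ℝ)+1 := by exact_mod_cast hk2
    push_cast
    nlinarith
  have hv2 : A.inf' h (fun a => (((m+2 : ℕ):ℝ)+1 - a)^2) = 4/9 := by
    apply hval (m+2) _ ((m:ℝ)+7/3) hm2 (by push_cast; ring)
    intro b hb
    rcases hmem b hb with ⟨k, hk1, hk2, rfl⟩ | rfl | rfl | rfl <;>
      [skip; (push_cast; nlinarith); (push_cast; nlinarith); (push_cast; nlinarith)]
    have hkr : (k:ℝ) ≤ (m:ℝ)+1 := by exact_mod_cast hk2
    push_cast
    nlinarith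
  have hv3 : A.inf' h (fun a => (((m+3 : ℕ):ℝ)+1 - a)^2) = 1/9 := by
    apply hval (m+3) _ ((m:ℝ)+13/3) hm3 (by push_cast; ring)
    intro b hb
    rcases hmem b hb with ⟨k, hk1, hk2, rfl⟩ | rfl | rfl | rfl <;>
      [skip; (push_cast; nlinarith); (push_cast; nlinarith); (push_cast; nlinarith)]
    have hkr : (k:ℝ) ≤ (m:ℝ)+1 := by exact_mod_cast hk2
    push_cast
    nlinarith
  have hv4 : A.inf' h (fun a => (((m+4 : ℕ):ℝ)+1 - a)^2) = 4/9 := by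
    apply hval (m+4) _ ((m:ℝ)+13/3) hm3 (by push_cast; ring)
    intro b hb
    rcases hmem b hb with ⟨k, hk1, hk2, rfl⟩ | rfl | rfl | rfl <;>
      [skip; (push_cast; nlinarith); (push_cast; nlinarith); (push_cast; nlinarith)]
    have hkr : (k:ℝ) ≤ (m:ℝ)+1 := by exact_mod_cast hk2
    push_cast
    nlinarith
  have hsum : (∑ i ∈ Finset.range (m+5), (1/2^(i+1) : ℝ) * A.inf' h (fun a => ((i+1 : ℝ) - a)^2))
      = (1/2:ℝ)^(m+2) * (1/9) + (1/2:ℝ)^(m+3) * (4/9)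
        + (1/2:ℝ)^(m+4) * (1/9) + (1/2:ℝ)^(m+5) * (4/9) := by
    rw [Finset.sum_range_succ, Finset.sum_range_succ, Finset.sum_range_succ,
        Finset.sum_range_succ]
    have hz2 : (∑ i ∈ Finset.range (m+1), (1/2^(i+1) : ℝ) * A.inf' h (fun a => ((i+1 : ℝ) - a)^2)) = 0 := by
      apply Finset.sum_eq_zero
      intro i hi
      rw [hz i (by simpa using Nat.lt_succ_iff.mp (Finset.mem_range.mp hi))]
      ring
    rw [hz2, hv1, hv2, hv3, hv4, half_pow, half_pow, half_pow, half_pow]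
    ring
  rw [herr, hsum]
  have hq2 : (1/2:ℝ)^(m+2) = 4 * (1/2:ℝ)^(m+4) := by rw [pow_succ, pow_succ]; ring
  have hq3 : (1/2:ℝ)^(m+3) = 2 * (1/2:ℝ)^(m+4) := by rw [pow_succ]; ring
  have hq5 : (1/2:ℝ)^(m+5) = (1/2:ℝ)^(m+4) / 2 := by rw [pow_succ]; ring
  rw [hq2, hq3, hq5]
  push_cast
  ring

theorem stmt16 (n : ℕ) (hn : 4 ≤ n) :
    sInf {v : ℝ | ∃ (α : Finset ℝ) (h : α.Nonempty), α.card ≤ n ∧ v = errG α h}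
      = (2 : ℝ)^(3 - (n : ℤ)) / 3 ∧
    errG ((Finset.Icc 1 (n-2)).image (fun j : ℕ => (j : ℝ)) ∪ {avG (n-1) n, avGTail (n+1)})
        (by simp) = (2 : ℝ)^(3 - (n : ℤ)) / 3 ∧
    errG ((Finset.Icc 1 (n-3)).image (fun j : ℕ => (j : ℝ)) ∪
        {avG (n-2) (n-1), avG n (n+1), avGTail (n+2)})
        (by simp) = (2 : ℝ)^(3 - (n : ℤ)) / 3 ∧
    ((Finset.Icc 1 (n-2)).image (fun j : ℕ => (j : ℝ)) ∪ {avG (n-1) n, avGTail (n+1)}) ≠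
      ((Finset.Icc 1 (n-3)).image (fun j : ℕ => (j : ℝ)) ∪
        {avG (n-2) (n-1), avG n (n+1), avGTail (n+2)}) := by
  obtain ⟨m, rfl⟩ : ∃ m, n = m + 4 := ⟨n - 4, by omega⟩
  have hv1 : avG (m+4-1) (m+4) = (m:ℝ) + 10/3 := by
    have h := avG_succ (m+3)
    rw [show m+3+1 = m+4 from rfl] at h
    rw [show m+4-1 = m+3 from rfl, h]
    push_cast; ring
  have hv2 : avGTail (m+4+1) = (m:ℝ) + 6 := by
    rw [avGTail_val]; push_cast; ring
  have hv3 : avG (m+4-2) (m+4-1) = (m:ℝ) + 7/3 := by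
    have h := avG_succ (m+2)
    rw [show m+2+1 = m+3 from rfl] at h
    rw [show m+4-2 = m+2 from rfl, show m+4-1 = m+3 from rfl, h]
    push_cast; ring
  have hv4 : avG (m+4) (m+4+1) = (m:ℝ) + 13/3 := by
    rw [avG_succ]; push_cast; ring
  have hv5 : avGTail (m+4+2) = (m:ℝ) + 7 := by
    rw [avGTail_val]; push_cast; ring
  have htarget : (2:ℝ)^(3 - ((m+4:ℕ):ℤ))/3 = 8/3 * (1/2:ℝ)^(m+4) := by
    have h1 : (3 - ((m+4:ℕ):ℤ)) = -((m+1:ℕ):ℤ) := by push_cast; ring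
    rw [h1, zpow_neg, zpow_natCast, ← half_pow]
    rw [show m+4 = (m+1)+3 from rfl, pow_add]
    have : (0:ℝ) < 2^(m+1) := by positivity
    field_simp
    ring
  have hseq1 : (Finset.Icc 1 (m+4-2)).image (fun j : ℕ => (j : ℝ))
      ∪ {avG (m+4-1) (m+4), avGTail (m+4+1)}
      = (Finset.Icc 1 (m+2)).image (fun j : ℕ => (j : ℝ)) ∪ {(m:ℝ)+10/3, (m:ℝ)+6} := by
    rw [show m+4-2 = m+2 from rfl, hv1, hv2]
  have hseq2 : (Finset.Icc 1 (m+4-3)).image (fun j : ℕ => (j : ℝ))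
      ∪ {avG (m+4-2) (m+4-1), avG (m+4) (m+4+1), avGTail (m+4+2)}
      = (Finset.Icc 1 (m+1)).image (fun j : ℕ => (j : ℝ))
        ∪ {(m:ℝ)+7/3, (m:ℝ)+13/3, (m:ℝ)+7} := by
    rw [show m+4-3 = m+1 from rfl, hv3, hv4, hv5]
  have hAne : ((Finset.Icc 1 (m+2)).image (fun j : ℕ => (j : ℝ))
      ∪ {(m:ℝ)+10/3, (m:ℝ)+6}).Nonempty :=
    ⟨(m:ℝ)+10/3, Finset.mem_union_right _ (Finset.mem_insert_self _ _)⟩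
  have hBne : ((Finset.Icc 1 (m+1)).image (fun j : ℕ => (j : ℝ))
      ∪ {(m:ℝ)+7/3, (m:ℝ)+13/3, (m:ℝ)+7}).Nonempty :=
    ⟨(m:ℝ)+7/3, Finset.mem_union_right _ (Finset.mem_insert_self _ _)⟩
  have hpart2 : errG ((Finset.Icc 1 (m+4-2)).image (fun j : ℕ => (j : ℝ))
      ∪ {avG (m+4-1) (m+4), avGTail (m+4+1)}) (by simp) = (2 : ℝ)^(3 - ((m+4:ℕ) : ℤ)) / 3 := by
    rw [errG_congr _ _ _ hAne hseq1, part2comp m hAne, htarget]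
  have hpart3 : errG ((Finset.Icc 1 (m+4-3)).image (fun j : ℕ => (j : ℝ))
      ∪ {avG (m+4-2) (m+4-1), avG (m+4) (m+4+1), avGTail (m+4+2)}) (by simp)
      = (2 : ℝ)^(3 - ((m+4:ℕ) : ℤ)) / 3 := by
    rw [errG_congr _ _ _ hBne hseq2, part3comp m hBne, htarget]
  refine ⟨?_, hpart2, hpart3, ?_⟩
  · -- sInf
    rw [htarget]
    apply IsLeast.csInf_eq
    constructor
    · -- membership
      refine ⟨_, hAne, ?_, (part2comp m hAne).symm⟩
      have hc1 : ((Finset.Icc 1 (m+2)).image (fun j : ℕ => (j : ℝ))).card ≤ m+2 := by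
        refine le_trans Finset.card_image_le ?_
        rw [Nat.card_Icc]
        omega
      have hc2 : ({(m:ℝ)+10/3, (m:ℝ)+6} : Finset ℝ).card ≤ 2 := by
        refine le_trans (Finset.card_insert_le _ _) ?_
        simp
      calc ((Finset.Icc 1 (m+2)).image (fun j : ℕ => (j : ℝ))
            ∪ {(m:ℝ)+10/3, (m:ℝ)+6}).card
          ≤ _ + _ := Finset.card_union_le _ _
        _ ≤ m + 4 := by omega
    · -- lower bound
      rintro v ⟨α, hne, hcard, rfl⟩
      have hlow := errG_lower (m+3) α hne (by omega)
      have hB : Bnd (m+4) = 8/3 * (1/2:ℝ)^(m+4) := by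
        have : ¬ (m+4 ≤ 1) := by omega
        simp only [Bnd, if_neg this]
      rw [show m+3+1 = m+4 from rfl, hB] at hlow
      exact hlow
  · -- the two sets differ
    rw [hseq1, hseq2]
    intro heq
    have hmem : (m:ℝ)+10/3 ∈ (Finset.Icc 1 (m+1)).image (fun j : ℕ => (j : ℝ))
        ∪ {(m:ℝ)+7/3, (m:ℝ)+13/3, (m:ℝ)+7} := by
      rw [← heq]
      exact Finset.mem_union_right _ (Finset.mem_insert_self _ _)
    rw [Finset.mem_union, Finset.mem_image] at hmem
    rcases hmem with ⟨k, hk, hke⟩ | hmem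
    · rw [Finset.mem_Icc] at hk
      have : (k:ℝ) ≤ (m:ℝ)+1 := by exact_mod_cast hk.2
      rw [hke] at this
      linarith
    · rw [Finset.mem_insert, Finset.mem_insert, Finset.mem_singleton] at hmem
      rcases hmem with h' | h' | h' <;> linarith [h']
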